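/- The Bonferroni-based gatekeeping procedure with retesting of Algorithm 2 strongly controls the global FWER at level α under arbitrary dependence: given m ≥ 2 families F_i of sizes n_i with superuniform true-null p-values, initial levels α_i ≥ 0 summing to α, and a transition matrix G with entries in [0,1], zero diagonal and unit row sums, if at each stage k each family F_i is tested by the Bonferroni procedure at the updated level α_{i(k)} (per the update rule) and rejection sets are nested across stages, then for every configuration of true nulls, Pr(some true null is rejected at some stage) ≤ α. -/

import Mathlib

open MeasureTheory

noncomputable def Ahat {m : ℕ} (f a : Fin m → ℝ) (g : Fin m → Fin m → ℝ) : Fin m → ℝ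
  | i => a i
      + (∑ j ∈ (Finset.univ.filter (fun j => j < i)).attach,
          f j.1 * g j.1 i * Ahat f a g j.1)
      + ∑ l ∈ Finset.univ.filter (fun l => i < l), f l * g l i * a l
termination_by i => i.val
decreasing_by
  exact (Finset.mem_filter.mp j.2).2

lemma Ahat_eq {m : ℕ} (f a : Fin m → ℝ) (g : Fin m → Fin m → ℝ) (i : Fin m) :
    Ahat f a g i = a i
      + (∑ j ∈ Finset.univ.filter (fun j => j < i), f j * g j i * Ahat f a g j)
      + ∑ l ∈ Finset.univ.filter (fun l => i < l), f l * g l i * a l := by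
  rw [Ahat, Finset.sum_attach (Finset.univ.filter (fun j => j < i))
    (fun j => f j * g j i * Ahat f a g j)]
lemma fin_strong_ind {m : ℕ} {P : Fin m → Prop}
    (h : ∀ i, (∀ j, j < i → P j) → P i) : ∀ i, P i := by
  have key : ∀ v : ℕ, ∀ i : Fin m, i.val ≤ v → P i := by
    intro v
    induction v with
    | zero => exact fun i hi => h i (fun j hj => absurd (Fin.lt_iff_val_lt_val.mp hj) (by omega))
    | succ v ih => exact fun i hi => h i (fun j hj =>
        ih j (by have := Fin.lt_iff_val_lt_val.mp hj; omega))
  exact fun i => key i.val i le_rfl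

lemma a_le_Ahat {m : ℕ} {f a : Fin m → ℝ} {g : Fin m → Fin m → ℝ}
    (hf : ∀ i, 0 ≤ f i) (ha : ∀ i, 0 ≤ a i) (hg : ∀ i j, 0 ≤ g i j) :
    ∀ i, a i ≤ Ahat f a g i := by
  refine fin_strong_ind (fun i ih => ?_)
  · rw [Ahat_eq]
    have h1 : 0 ≤ ∑ j ∈ Finset.univ.filter (fun j => j < i),
        f j * g j i * Ahat f a g j := by
      refine Finset.sum_nonneg fun j hj => ?_
      have hj' : j < i := (Finset.mem_filter.mp hj).2
      exact mul_nonneg (mul_nonneg (hf j) (hg j i)) (le_trans (ha j) (ih j hj'))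
    have h2 : 0 ≤ ∑ l ∈ Finset.univ.filter (fun l => i < l), f l * g l i * a l := by
      refine Finset.sum_nonneg fun l _ => ?_
      have := ha l; have := hf l; have := hg l i
      positivity
    linarith

lemma Ahat_key {m : ℕ} {f a : Fin m → ℝ} {g : Fin m → Fin m → ℝ}
    (hf : ∀ i, 0 ≤ f i) (ha : ∀ i, 0 ≤ a i) (hg : ∀ i j, 0 ≤ g i j)
    (hgdiag : ∀ i, g i i = 0) (hgrow : ∀ i, ∑ j, g i j = 1) :
    ∑ i, (1 - f i) * Ahat f a g i ≤ ∑ i, a i := by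
  set B := Ahat f a g with hB
  have haB : ∀ i, a i ≤ B i := a_le_Ahat hf ha hg
  have hB0 : ∀ i, 0 ≤ B i := fun i => le_trans (ha i) (haB i)
  have hsum : ∑ i, B i ≤ ∑ i, a i + ∑ j, f j * B j := by
    have e1 : ∑ i, B i = ∑ i, a i
        + ∑ i, ∑ j ∈ Finset.univ.filter (fun j => j < i), f j * g j i * B j
        + ∑ i, ∑ l ∈ Finset.univ.filter (fun l => i < l), f l * g l i * a l := by
      rw [← Finset.sum_add_distrib, ← Finset.sum_add_distrib]
      exact Finset.sum_congr rfl fun i _ => Ahat_eq f a g i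
    have e2 : ∑ i, ∑ l ∈ Finset.univ.filter (fun l => i < l), f l * g l i * a l
        ≤ ∑ i, ∑ l ∈ Finset.univ.filter (fun l => i < l), f l * g l i * B l := by
      refine Finset.sum_le_sum fun i _ => Finset.sum_le_sum fun l _ => ?_
      exact mul_le_mul_of_nonneg_left (haB l) (by have := hf l; have := hg l i; positivity)
    -- swap sums: over pairs j < i
    have swap1 : ∑ i, ∑ j ∈ Finset.univ.filter (fun j => j < i), f j * g j i * B j
        = ∑ j, f j * B j * ∑ i ∈ Finset.univ.filter (fun i => j < i), g j i := by
      simp only [Finset.sum_filter]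
      rw [Finset.sum_comm]
      refine Finset.sum_congr rfl fun j _ => ?_
      rw [Finset.mul_sum]
      refine Finset.sum_congr rfl fun i _ => ?_
      split <;> ring
    have swap2 : ∑ i, ∑ l ∈ Finset.univ.filter (fun l => i < l), f l * g l i * B l
        = ∑ l, f l * B l * ∑ i ∈ Finset.univ.filter (fun i => i < l), g l i := by
      simp only [Finset.sum_filter]
      rw [Finset.sum_comm]
      refine Finset.sum_congr rfl fun l _ => ?_
      rw [Finset.mul_sum]
      refine Finset.sum_congr rfl fun i _ => ?_
      split <;> ring
    have gsum : ∀ j : Fin m, (∑ i ∈ Finset.univ.filter (fun i => j < i), g j i)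
        + ∑ i ∈ Finset.univ.filter (fun i => i < j), g j i = 1 := by
      intro j
      rw [Finset.sum_filter, Finset.sum_filter, ← Finset.sum_add_distrib]
      rw [← hgrow j]
      refine Finset.sum_congr rfl fun i _ => ?_
      rcases lt_trichotomy i j with h | h | h
      · simp [h, asymm h]
      · subst h; simp [hgdiag]
      · simp [h, asymm h]
    have comb : (∑ j, f j * B j * ∑ i ∈ Finset.univ.filter (fun i => j < i), g j i)
        + ∑ j, f j * B j * ∑ i ∈ Finset.univ.filter (fun i => i < j), g j i
        = ∑ j, f j * B j := by
      rw [← Finset.sum_add_distrib]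
      refine Finset.sum_congr rfl fun j _ => ?_
      rw [← mul_add, gsum j, mul_one]
    linarith [e1, e2, swap1, swap2, comb]
  have : ∑ i, (1 - f i) * B i = ∑ i, B i - ∑ i, f i * B i := by
    rw [← Finset.sum_sub_distrib]
    exact Finset.sum_congr rfl fun i _ => by ring
  linarith

/-- Theorem 1: the Bonferroni-based gatekeeping procedure with retesting
(Algorithm 2) strongly controls the global FWER at level `α` under arbitrary
dependence. -/
theorem algorithm2_retesting_FWER_control
    {Ω : Type*} [MeasurableSpace Ω] (μ : Measure Ω) [IsProbabilityMeasure μ]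
    (m : ℕ) (hm : 2 ≤ m)
    (n : Fin m → ℕ) (hn : ∀ i, 0 < n i)
    (p : (i : Fin m) → Fin (n i) → Ω → ℝ)
    (hmeas : ∀ i s, Measurable (p i s))
    (T : (i : Fin m) → Finset (Fin (n i)))
    (hsuper : ∀ i, ∀ s ∈ T i, ∀ u ∈ Set.Icc (0 : ℝ) 1,
      μ {ω | p i s ω ≤ u} ≤ ENNReal.ofReal u)
    (a : Fin m → ℝ) (α : ℝ) (ha : ∀ i, 0 ≤ a i) (hα : ∑ i, a i = α)
    (g : Fin m → Fin m → ℝ)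
    (hg0 : ∀ i j, 0 ≤ g i j) (hg1 : ∀ i j, g i j ≤ 1)
    (hgdiag : ∀ i, g i i = 0) (hgrow : ∀ i, ∑ j, g i j = 1)
    -- stagewise local levels, as functions of the data:
    (A : Fin m → ℕ → Ω → ℝ)
    (hAone : ∀ i ω, A i 1 ω = a i
      + ∑ j ∈ Finset.univ.filter (fun j => j < i),
          (((Finset.univ.filter fun s => p j s ω ≤ A j 1 ω / n j).card : ℝ)
            / n j) * g j i * A j 1 ω)
    (hAk : ∀ k, 2 ≤ k → ∀ i ω, A i k ω = a i
      + (∑ j ∈ Finset.univ.filter (fun j => j < i),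
          (((Finset.univ.filter fun s => p j s ω ≤ A j k ω / n j).card : ℝ)
            / n j) * g j i * A j k ω)
      + ∑ l ∈ Finset.univ.filter (fun l => i < l),
          (((Finset.univ.filter fun s =>
              p l s ω ≤ A l (k - 1) ω / n l).card : ℝ) / n l) * g l i * a l)
    -- rejection sets are nested across stages:
    (hnest : ∀ i ω s k k', 1 ≤ k → k ≤ k' →
      p i s ω ≤ A i k ω / n i → p i s ω ≤ A i k' ω / n i) :
    μ {ω | ∃ k, 1 ≤ k ∧ ∃ i, ∃ s ∈ T i, p i s ω ≤ A i k ω / n i}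
      ≤ ENNReal.ofReal α := by
  classical
  set t : Fin m → ℕ := fun i => (T i).card with ht
  set f : Fin m → ℝ := fun i => ((n i : ℝ) - t i) / n i with hfdef
  have hn' : ∀ i, (0:ℝ) < n i := fun i => by exact_mod_cast hn i
  have htn : ∀ i, t i ≤ n i := fun i => by
    have := Finset.card_le_univ (T i)
    simpa [ht, Finset.card_univ] using this
  have hf0 : ∀ i, 0 ≤ f i := fun i => by
    apply div_nonneg _ (le_of_lt (hn' i))
    have : (t i : ℝ) ≤ n i := by exact_mod_cast htn i
    linarith
  have hf1 : ∀ i, f i ≤ 1 := fun i => by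
    rw [hfdef, div_le_one (hn' i)]
    have : (0:ℝ) ≤ t i := Nat.cast_nonneg _
    linarith
  set B := Ahat f a g with hBdef
  have hBeq : ∀ i, B i = a i
      + (∑ j ∈ Finset.univ.filter (fun j => j < i), f j * g j i * B j)
      + ∑ l ∈ Finset.univ.filter (fun l => i < l), f l * g l i * a l :=
    Ahat_eq f a g
  have haB : ∀ i, a i ≤ B i := a_le_Ahat hf0 ha hg0
  have hB0 : ∀ i, 0 ≤ B i := fun i => le_trans (ha i) (haB i)
  -- nonnegativity of the stagewise levels
  have hA0 : ∀ ω k, 1 ≤ k → ∀ i, 0 ≤ A i k ω := by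
    intro ω k hk
    refine fin_strong_ind (fun i ih => ?_)
    rcases eq_or_lt_of_le hk with h1 | h2
    · rw [← h1] at ih ⊢
      rw [hAone i ω]
      refine add_nonneg (ha i) (Finset.sum_nonneg fun j hj => ?_)
      exact mul_nonneg (mul_nonneg (div_nonneg (Nat.cast_nonneg _) (Nat.cast_nonneg _))
        (hg0 j i)) (ih j (Finset.mem_filter.mp hj).2)
    · rw [hAk k h2 i ω]
      refine add_nonneg (add_nonneg (ha i) (Finset.sum_nonneg fun j hj => ?_))
        (Finset.sum_nonneg fun l _ => ?_)
      · exact mul_nonneg (mul_nonneg (div_nonneg (Nat.cast_nonneg _) (Nat.cast_nonneg _))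
          (hg0 j i)) (ih j (Finset.mem_filter.mp hj).2)
      · exact mul_nonneg (mul_nonneg (div_nonneg (Nat.cast_nonneg _) (Nat.cast_nonneg _))
          (hg0 l i)) (ha l)
  -- the crucial inclusion into a deterministic union
  have hsub : {ω | ∃ k, 1 ≤ k ∧ ∃ i, ∃ s ∈ T i, p i s ω ≤ A i k ω / n i}
      ⊆ ⋃ i, ⋃ s ∈ T i, {ω | p i s ω ≤ B i / n i} := by
    intro ω hω
    have hP : ∃ k, 1 ≤ k ∧ ∃ i, ∃ s ∈ T i, p i s ω ≤ A i k ω / n i := hω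
    set k0 := Nat.find hP with hk0def
    have hk0 := Nat.find_spec hP
    have hk0min : ∀ k < k0, ¬ (1 ≤ k ∧ ∃ i, ∃ s ∈ T i, p i s ω ≤ A i k ω / n i) :=
      fun k hk => Nat.find_min hP hk
    obtain ⟨hk1, i1, s1, hs1, hp1⟩ := hk0
    set S : Finset (Fin m) :=
      Finset.univ.filter (fun i => ∃ s ∈ T i, p i s ω ≤ A i k0 ω / n i) with hSdef
    have hSne : S.Nonempty :=
      ⟨i1, Finset.mem_filter.mpr ⟨Finset.mem_univ _, s1, hs1, hp1⟩⟩
    set i0 := S.min' hSne with hi0def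
    obtain ⟨-, s0, hs0, hp0⟩ := Finset.mem_filter.mp (S.min'_mem hSne)
    have hmin : ∀ j, j < i0 → ∀ s ∈ T j, ¬ p j s ω ≤ A j k0 ω / n j := by
      intro j hj s hs hps
      exact absurd (S.min'_le j (Finset.mem_filter.mpr
        ⟨Finset.mem_univ _, s, hs, hps⟩)) (not_le.mpr hj)
    have hcard : ∀ (i : Fin m) (k : ℕ), (∀ s ∈ T i, ¬ p i s ω ≤ A i k ω / n i) →
        ((Finset.univ.filter fun s => p i s ω ≤ A i k ω / n i).card : ℝ) / n i ≤ f i := by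
      intro i k hno
      rw [hfdef, div_le_div_iff_of_pos_right (hn' i)]
      have hsubset : (Finset.univ.filter fun s => p i s ω ≤ A i k ω / n i)
          ⊆ Finset.univ \ T i := by
        intro s hsmem
        exact Finset.mem_sdiff.mpr ⟨Finset.mem_univ _,
          fun hsT => hno s hsT (Finset.mem_filter.mp hsmem).2⟩
      have hc := Finset.card_le_card hsubset
      rw [Finset.card_sdiff_of_subset (Finset.subset_univ _), Finset.card_univ, Fintype.card_fin] at hc
      calc ((Finset.univ.filter fun s => p i s ω ≤ A i k ω / n i).card : ℝ)
          ≤ ((n i - t i : ℕ) : ℝ) := by exact_mod_cast hc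
        _ = (n i : ℝ) - t i := by
            rw [Nat.cast_sub (htn i)]
    -- main induction: levels at stage k0 are dominated by the Ahat levels
    have key : ∀ i : Fin m, i ≤ i0 → A i k0 ω ≤ B i := by
      refine fin_strong_ind (fun i ih => ?_)
      intro hii0
      have hjb : ∀ j ∈ Finset.univ.filter (fun j => j < i),
          (((Finset.univ.filter fun s => p j s ω ≤ A j k0 ω / n j).card : ℝ)
            / n j) * g j i * A j k0 ω ≤ f j * g j i * B j := by
        intro j hj
        have hji : j < i := (Finset.mem_filter.mp hj).2
        have hji0 : j < i0 := lt_of_lt_of_le hji hii0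
        have h1 : ((Finset.univ.filter fun s => p j s ω ≤ A j k0 ω / n j).card : ℝ)
            / n j ≤ f j := hcard j k0 (hmin j hji0)
        have h2 : A j k0 ω ≤ B j := ih j hji (le_of_lt hji0)
        have h3 : 0 ≤ A j k0 ω := hA0 ω k0 hk1 j
        have h4 : 0 ≤ ((Finset.univ.filter fun s =>
            p j s ω ≤ A j k0 ω / n j).card : ℝ) / n j :=
          div_nonneg (Nat.cast_nonneg _) (Nat.cast_nonneg _)
        exact mul_le_mul (mul_le_mul_of_nonneg_right h1 (hg0 j i)) h2 h3
          (mul_nonneg (hf0 j) (hg0 j i))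
      rcases eq_or_lt_of_le hk1 with h1 | h2
      · -- k0 = 1 : no retesting term
        have hk0eq : k0 = 1 := by rw [hk0def, ← h1]
        rw [hk0eq] at hjb ⊢
        rw [hAone i ω]
        have hsum := Finset.sum_le_sum hjb
        have hl : 0 ≤ ∑ l ∈ Finset.univ.filter (fun l => i < l), f l * g l i * a l :=
          Finset.sum_nonneg fun l _ =>
            mul_nonneg (mul_nonneg (hf0 l) (hg0 l i)) (ha l)
        have := hBeq i
        linarith
      · -- 2 ≤ k0 : also bound the retesting term using stage minimality
        have h2' : 2 ≤ k0 := by omega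
        rw [hAk k0 h2' i ω]
        have hnok : ∀ l, ∀ s ∈ T l, ¬ p l s ω ≤ A l (k0 - 1) ω / n l := by
          intro l s hs hps
          exact hk0min (k0 - 1) (by omega) ⟨by omega, l, s, hs, hps⟩
        have hlb : ∀ l ∈ Finset.univ.filter (fun l => i < l),
            (((Finset.univ.filter fun s =>
                p l s ω ≤ A l (k0 - 1) ω / n l).card : ℝ) / n l) * g l i * a l
              ≤ f l * g l i * a l := by
          intro l _
          exact mul_le_mul_of_nonneg_right
            (mul_le_mul_of_nonneg_right (hcard l (k0 - 1) (hnok l)) (hg0 l i)) (ha l)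
        have hsum := Finset.sum_le_sum hjb
        have hsuml := Finset.sum_le_sum hlb
        have := hBeq i
        linarith
    have hfinal : p i0 s0 ω ≤ B i0 / n i0 :=
      le_trans hp0 ((div_le_div_iff_of_pos_right (hn' i0)).mpr (key i0 le_rfl))
    exact Set.mem_iUnion.mpr ⟨i0, Set.mem_iUnion.mpr ⟨s0, Set.mem_iUnion.mpr ⟨hs0, hfinal⟩⟩⟩
  -- measure computation
  refine le_trans (measure_mono hsub) ?_
  have step1 : μ (⋃ i, ⋃ s ∈ T i, {ω | p i s ω ≤ B i / n i})
      ≤ ∑ i, ∑ s ∈ T i, μ {ω | p i s ω ≤ B i / n i} := by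
    refine le_trans (measure_iUnion_le _) ?_
    rw [tsum_fintype]
    exact Finset.sum_le_sum fun i _ => measure_biUnion_finset_le _ _
  refine le_trans step1 ?_
  have hu0 : ∀ i, 0 ≤ B i / n i := fun i => div_nonneg (hB0 i) (le_of_lt (hn' i))
  have hone : ∀ i, ∀ s ∈ T i, μ {ω | p i s ω ≤ B i / n i}
      ≤ ENNReal.ofReal (B i / n i) := by
    intro i s hs
    by_cases h : B i / n i ≤ 1
    · exact hsuper i s hs _ ⟨hu0 i, h⟩
    · calc μ {ω | p i s ω ≤ B i / n i} ≤ 1 := prob_le_one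
        _ = ENNReal.ofReal 1 := ENNReal.ofReal_one.symm
        _ ≤ ENNReal.ofReal (B i / n i) :=
            ENNReal.ofReal_le_ofReal (le_of_lt (not_le.mp h))
  calc ∑ i, ∑ s ∈ T i, μ {ω | p i s ω ≤ B i / n i}
      ≤ ∑ i, ∑ s ∈ T i, ENNReal.ofReal (B i / n i) :=
        Finset.sum_le_sum fun i _ => Finset.sum_le_sum fun s hs => hone i s hs
    _ = ∑ i, ENNReal.ofReal ((t i : ℝ) * (B i / n i)) := by
        refine Finset.sum_congr rfl fun i _ => ?_
        rw [Finset.sum_const, ENNReal.ofReal_mul (Nat.cast_nonneg _)]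
        rw [ENNReal.ofReal_natCast]
        simp [ht, nsmul_eq_mul]
    _ = ENNReal.ofReal (∑ i, (t i : ℝ) * (B i / n i)) :=
        (ENNReal.ofReal_sum_of_nonneg fun i _ =>
          mul_nonneg (Nat.cast_nonneg _) (hu0 i)).symm
    _ ≤ ENNReal.ofReal α := by
        apply ENNReal.ofReal_le_ofReal
        have heq : ∀ i, (t i : ℝ) * (B i / n i) = (1 - f i) * B i := by
          intro i
          have hne : (n i : ℝ) ≠ 0 := ne_of_gt (hn' i)
          rw [hfdef]
          field_simp
          ring
        rw [Finset.sum_congr rfl fun i _ => heq i]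
        calc ∑ i, (1 - f i) * B i ≤ ∑ i, a i := Ahat_key hf0 ha hg0 hgdiag hgrow
          _ = α := hα
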